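/- Let Y = [a, b] ⊂ R with a < b, and let N_Y(y) denote the normal cone of convex analysis to Y at y ∈ Y, with N_Y(y) := ∅ for y ∉ Y. Then gph N_Y = ({a} × (−∞, 0]) ∪ ([a, b] × {0}) ∪ ({b} × [0, ∞)) ⊆ R², and for any (ȳ, ζ̄) ∈ gph N_Y the limiting normal cone to gph N_Y at (ȳ, ζ̄) is: R × {0} if ȳ = a and ζ̄ < 0; ((−∞, 0] × [0, ∞)) ∪ (R × {0}) ∪ ({0} × R) if ȳ = a and ζ̄ = 0; {0} × R if a < ȳ < b and ζ̄ = 0; ([0, ∞) × (−∞, 0]) ∪ (R × {0}) ∪ ({0} × R) if ȳ = b and ζ̄ = 0; and R × {0} if ȳ = b and ζ̄ > 0. -/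

import Mathlib

open Set Filter Topology Metric
open scoped RealInnerProductSpace Pointwise BigOperators

noncomputable section

/-- `R^n` as a Euclidean space. -/
abbrev Eu (n : ℕ) := EuclideanSpace ℝ (Fin n)

/-- The directional neighborhood `V_{ε,δ}(d)` of the origin in direction `d`. -/
def dirNbhd {H : Type*} [NormedAddCommGroup H] [NormedSpace ℝ H] (d : H) (ε δ : ℝ) :
    Set H :=
  {z | z ∈ Metric.ball (0 : H) ε ∧
    (d = 0 ∨ z = 0 ∨ (z ≠ 0 ∧ ‖‖z‖⁻¹ • z - ‖d‖⁻¹ • d‖ ≤ δ))}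

/-- The Fréchet (regular) normal cone to `Ω` at `z` (empty if `z ∉ Ω`). -/
def frechetNC {H : Type*} [NormedAddCommGroup H] [InnerProductSpace ℝ H]
    (Ω : Set H) (z : H) : Set H :=
  {ζ | z ∈ Ω ∧ ∀ ε > 0, ∃ ρ > 0, ∀ z' ∈ Ω, ‖z' - z‖ < ρ → ⟪ζ, z' - z⟫ ≤ ε * ‖z' - z‖}

/-- The limiting (Mordukhovich) normal cone to `Ω` at `z`. -/
def limNC {H : Type*} [NormedAddCommGroup H] [InnerProductSpace ℝ H]
    (Ω : Set H) (z : H) : Set H :=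
  {ζ | ∃ zs ζs : ℕ → H, Tendsto zs atTop (𝓝 z) ∧ Tendsto ζs atTop (𝓝 ζ) ∧
    ∀ k, ζs k ∈ frechetNC Ω (zs k)}

/-- The directional limiting normal cone to `Ω` at `z` in direction `d`. -/
def dirNC {H : Type*} [NormedAddCommGroup H] [InnerProductSpace ℝ H]
    (Ω : Set H) (z d : H) : Set H :=
  {ζ | ∃ (t : ℕ → ℝ) (ds ζs : ℕ → H), (∀ k, 0 < t k) ∧ Tendsto t atTop (𝓝 0) ∧
    Tendsto ds atTop (𝓝 d) ∧ Tendsto ζs atTop (𝓝 ζ) ∧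
    ∀ k, ζs k ∈ frechetNC Ω (z + t k • ds k)}

/-- The contingent (tangent) cone to `Ω` at `z`. -/
def tangentC {H : Type*} [NormedAddCommGroup H] [NormedSpace ℝ H]
    (Ω : Set H) (z : H) : Set H :=
  {d | ∃ (t : ℕ → ℝ) (ds : ℕ → H), (∀ k, 0 < t k) ∧ Tendsto t atTop (𝓝 0) ∧
    Tendsto ds atTop (𝓝 d) ∧ ∀ k, z + t k • ds k ∈ Ω}

/-- The Fréchet normal cone for subsets of a product of inner product spaces,
with the canonical pairing `⟪ζ₁, w₁⟫ + ⟪ζ₂, w₂⟫`. -/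
def frechetNCP {H K : Type*} [NormedAddCommGroup H] [InnerProductSpace ℝ H]
    [NormedAddCommGroup K] [InnerProductSpace ℝ K] (Ω : Set (H × K)) (z : H × K) :
    Set (H × K) :=
  {ζ | z ∈ Ω ∧ ∀ ε > 0, ∃ ρ > 0, ∀ z' ∈ Ω, ‖z' - z‖ < ρ →
    ⟪ζ.1, z'.1 - z.1⟫ + ⟪ζ.2, z'.2 - z.2⟫ ≤ ε * ‖z' - z‖}

/-- The limiting normal cone for subsets of a product of inner product spaces. -/
def limNCP {H K : Type*} [NormedAddCommGroup H] [InnerProductSpace ℝ H]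
    [NormedAddCommGroup K] [InnerProductSpace ℝ K] (Ω : Set (H × K)) (z : H × K) :
    Set (H × K) :=
  {ζ | ∃ zs ζs : ℕ → H × K, Tendsto zs atTop (𝓝 z) ∧ Tendsto ζs atTop (𝓝 ζ) ∧
    ∀ k, ζs k ∈ frechetNCP Ω (zs k)}

/-- The directional limiting normal cone for subsets of a product space. -/
def dirNCP {H K : Type*} [NormedAddCommGroup H] [InnerProductSpace ℝ H]
    [NormedAddCommGroup K] [InnerProductSpace ℝ K] (Ω : Set (H × K)) (z d : H × K) :
    Set (H × K) :=
  {ζ | ∃ (t : ℕ → ℝ) (ds ζs : ℕ → H × K), (∀ k, 0 < t k) ∧ Tendsto t atTop (𝓝 0) ∧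
    Tendsto ds atTop (𝓝 d) ∧ Tendsto ζs atTop (𝓝 ζ) ∧
    ∀ k, ζs k ∈ frechetNCP Ω (z + t k • ds k)}

/-- Directional metric subregularity of the set-valued map `Φ` at `(zbar, wbar)`
in direction `d`. -/
def MetrSubregDir {H K : Type*} [NormedAddCommGroup H] [NormedSpace ℝ H]
    [PseudoMetricSpace K] (Φ : H → Set K) (zbar : H) (wbar : K) (d : H) : Prop :=
  ∃ ε > 0, ∃ δ > 0, ∃ κ > 0, ∀ z : H, z - zbar ∈ dirNbhd d ε δ →
    Metric.infDist z {z' | wbar ∈ Φ z'} ≤ κ * Metric.infDist wbar (Φ z)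

/-- The lower-level solution map `S(x) = argmin_{y ∈ Y} f(x,y)`. -/
def Ssol {n m : ℕ} (Y : Set (EuclideanSpace ℝ (Fin m)))
    (f : EuclideanSpace ℝ (Fin n) → EuclideanSpace ℝ (Fin m) → ℝ)
    (x : EuclideanSpace ℝ (Fin n)) : Set (EuclideanSpace ℝ (Fin m)) :=
  {y | y ∈ Y ∧ ∀ y' ∈ Y, f x y ≤ f x y'}

/-- The partial gradient `∇_y f(x,y)`. -/
def gradY {n m : ℕ} (f : EuclideanSpace ℝ (Fin n) → EuclideanSpace ℝ (Fin m) → ℝ)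
    (x : EuclideanSpace ℝ (Fin n)) (y : EuclideanSpace ℝ (Fin m)) :
    EuclideanSpace ℝ (Fin m) :=
  gradient (f x) y

/-- The partial gradient `∇_x f(x,y)`. -/
def gradX {n m : ℕ} (f : EuclideanSpace ℝ (Fin n) → EuclideanSpace ℝ (Fin m) → ℝ)
    (x : EuclideanSpace ℝ (Fin n)) (y : EuclideanSpace ℝ (Fin m)) :
    EuclideanSpace ℝ (Fin n) :=
  gradient (fun x' => f x' y) x

/-- The first-order (stationary) solution map
`S_FO(x) = {y ∈ Y : 0 ∈ ∇_y f(x,y) + N̂_Y(y)}`. -/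
def SFO {n m : ℕ} (Y : Set (EuclideanSpace ℝ (Fin m)))
    (f : EuclideanSpace ℝ (Fin n) → EuclideanSpace ℝ (Fin m) → ℝ)
    (x : EuclideanSpace ℝ (Fin n)) : Set (EuclideanSpace ℝ (Fin m)) :=
  {y | y ∈ Y ∧ -gradY f x y ∈ frechetNC Y y}

/-- The graph of the Fréchet normal cone map `y ⇉ N̂_Y(y)`. -/
def gphN {m : ℕ} (Y : Set (EuclideanSpace ℝ (Fin m))) :
    Set (EuclideanSpace ℝ (Fin m) × EuclideanSpace ℝ (Fin m)) :=
  {p | p.2 ∈ frechetNC Y p.1}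

/-- `S` has a Lipschitz single-valued localization near `(xbar, ybar)`. -/
def HasLipLoc {n m : ℕ} (S : EuclideanSpace ℝ (Fin n) → Set (EuclideanSpace ℝ (Fin m)))
    (xbar : EuclideanSpace ℝ (Fin n)) (ybar : EuclideanSpace ℝ (Fin m)) : Prop :=
  ∃ (U : Set (EuclideanSpace ℝ (Fin n))) (V : Set (EuclideanSpace ℝ (Fin m)))
    (s : EuclideanSpace ℝ (Fin n) → EuclideanSpace ℝ (Fin m)) (L : NNReal),
      IsOpen U ∧ xbar ∈ U ∧ IsOpen V ∧ ybar ∈ V ∧ LipschitzOnWith L s U ∧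
      (∀ x ∈ U, s x ∈ V) ∧ ∀ x ∈ U, S x ∩ V = {s x}

/-- The inf-compactness condition at `xbar` relative to `ybar ∈ S(xbar)`. -/
def InfCompact {n m : ℕ} (Y : Set (EuclideanSpace ℝ (Fin m)))
    (f : EuclideanSpace ℝ (Fin n) → EuclideanSpace ℝ (Fin m) → ℝ)
    (xbar : EuclideanSpace ℝ (Fin n)) (ybar : EuclideanSpace ℝ (Fin m)) : Prop :=
  ∃ (C : Set (EuclideanSpace ℝ (Fin m))) (α : ℝ) (U : Set (EuclideanSpace ℝ (Fin n))),
    IsCompact C ∧ f xbar ybar < α ∧ U ∈ 𝓝 xbar ∧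
    (∀ x ∈ U, {y | y ∈ Y ∧ f x y ≤ α} ⊆ C) ∧ ∀ x ∈ U, (Ssol Y f x).Nonempty

/-- The normal cone of convex analysis to `[a,b]` at `y` (empty outside `[a,b]`). -/
def NIcc (a b : ℝ) (y : ℝ) : Set ℝ :=
  {ζ | y ∈ Icc a b ∧ ∀ y' ∈ Icc a b, ζ * (y' - y) ≤ 0}

/-- The graph of the normal cone map of `[a,b]`. -/
def gphNIcc (a b : ℝ) : Set (ℝ × ℝ) := {p | p.2 ∈ NIcc a b p.1}

lemma mem_gph {a b : ℝ} (hab : a < b) (p : ℝ × ℝ) :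
    p ∈ gphNIcc a b ↔ (p.1 = a ∧ p.2 ≤ 0) ∨ (p.1 ∈ Icc a b ∧ p.2 = 0) ∨ (p.1 = b ∧ 0 ≤ p.2) := by
  constructor
  · rintro ⟨hy, h⟩
    rcases lt_trichotomy p.2 0 with hζ | hζ | hζ
    · left
      have ha := h a ⟨le_refl a, hab.le⟩
      constructor
      · nlinarith [hy.1]
      · exact hζ.le
    · exact Or.inr (Or.inl ⟨hy, hζ⟩)
    · right; right
      have hb := h b ⟨hab.le, le_refl b⟩
      constructor
      · nlinarith [hy.2]
      · exact hζ.le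
  · rintro (⟨h1, h2⟩ | ⟨h1, h2⟩ | ⟨h1, h2⟩)
    · exact ⟨by rw [h1]; exact ⟨le_rfl, hab.le⟩, fun y' hy' => by nlinarith [hy'.1]⟩
    · exact ⟨h1, fun y' hy' => by rw [h2]; ring_nf; simp⟩
    · exact ⟨by rw [h1]; exact ⟨hab.le, le_rfl⟩, fun y' hy' => by nlinarith [hy'.2]⟩

/-- sufficiency: if the pairing is ≤ 0 on a neighborhood, then ζ is a Fréchet normal -/
lemma mem_fre {Ω : Set (ℝ × ℝ)} {z ζ : ℝ × ℝ} (hz : z ∈ Ω) (ρ : ℝ) (hρ : 0 < ρ)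
    (h : ∀ z' ∈ Ω, ‖z' - z‖ < ρ → ζ.1 * (z'.1 - z.1) + ζ.2 * (z'.2 - z.2) ≤ 0) :
    ζ ∈ frechetNCP Ω z := by
  refine ⟨hz, fun ε hε => ⟨ρ, hρ, fun z' hz' hn => ?_⟩⟩
  have := h z' hz' hn
  simp only [RCLike.inner_apply, conj_trivial]
  have : ε * ‖z' - z‖ ≥ 0 := mul_nonneg hε.le (norm_nonneg _)
  linarith [h z' hz' hn]

/-- necessity test: pairing with a feasible direction is ≤ 0 -/
lemma test_dir {Ω : Set (ℝ × ℝ)} {z ζ : ℝ × ℝ} (hζ : ζ ∈ frechetNCP Ω z) (v : ℝ × ℝ)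
    (t₀ : ℝ) (ht₀ : 0 < t₀) (hv : ∀ t : ℝ, 0 < t → t ≤ t₀ → z + t • v ∈ Ω) :
    ζ.1 * v.1 + ζ.2 * v.2 ≤ 0 := by
  by_contra hc
  push_neg at hc
  set c := ζ.1 * v.1 + ζ.2 * v.2 with hcdef
  have hvn : (0:ℝ) ≤ ‖v‖ := norm_nonneg v
  have hden : (0:ℝ) < 2 * (‖v‖ + 1) := by linarith
  set ε := c / (2 * (‖v‖ + 1)) with hεdef
  have hε : 0 < ε := div_pos hc hden
  obtain ⟨ρ, hρ, hρ'⟩ := hζ.2 ε hε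
  set t := min t₀ (ρ / (2 * (‖v‖ + 1))) with htdef
  have ht : 0 < t := lt_min ht₀ (div_pos hρ hden)
  have hmem : z + t • v ∈ Ω := hv t ht (min_le_left _ _)
  have hsub : (z + t • v) - z = t • v := add_sub_cancel_left z _
  have hnorm : ‖(z + t • v) - z‖ = t * ‖v‖ := by
    rw [hsub, norm_smul, Real.norm_eq_abs, abs_of_pos ht]
  have hlt : ‖(z + t • v) - z‖ < ρ := by
    rw [hnorm]
    have h1 : t ≤ ρ / (2 * (‖v‖ + 1)) := min_le_right _ _
    have : t * ‖v‖ ≤ ρ / (2 * (‖v‖ + 1)) * ‖v‖ := by nlinarith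
    have : ρ / (2 * (‖v‖ + 1)) * ‖v‖ < ρ := by
      rw [div_mul_eq_mul_div, div_lt_iff₀ hden]; nlinarith
    linarith
  have key := hρ' _ hmem hlt
  simp only [RCLike.inner_apply, conj_trivial] at key
  have h1 : (z + t • v).1 - z.1 = t * v.1 := by
    show z.1 + t * v.1 - z.1 = t * v.1; ring
  have h2 : (z + t • v).2 - z.2 = t * v.2 := by
    show z.2 + t * v.2 - z.2 = t * v.2; ring
  rw [h1, h2, hnorm] at key
  have hkc : t * c ≤ ε * (t * ‖v‖) := by
    have : t * c = ζ.1 * (t * v.1) + ζ.2 * (t * v.2) := by rw [hcdef]; ring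
    linarith
  have hεv : ε * ‖v‖ < c := by
    rw [hεdef, div_mul_eq_mul_div, div_lt_iff₀ hden]; nlinarith
  nlinarith

section Suff
variable {a b : ℝ}

lemma snd_close {z z' : ℝ × ℝ} {ρ : ℝ} (h : ‖z' - z‖ < ρ) : |z'.2 - z.2| < ρ :=
  lt_of_le_of_lt ((Real.norm_eq_abs _) ▸ norm_snd_le (z' - z)) h

lemma fst_close {z z' : ℝ × ℝ} {ρ : ℝ} (h : ‖z' - z‖ < ρ) : |z'.1 - z.1| < ρ :=
  lt_of_le_of_lt ((Real.norm_eq_abs _) ▸ norm_fst_le (z' - z)) h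

/-- L1: at a point (a, ζ') with ζ' < 0, any (ξ,0) is a Fréchet normal. -/
lemma memL1 (hab : a < b) {ζ' : ℝ} (hζ' : ζ' < 0) (ξ : ℝ) :
    ((ξ, 0) : ℝ × ℝ) ∈ frechetNCP (gphNIcc a b) (a, ζ') := by
  refine mem_fre ((mem_gph hab _).2 (Or.inl ⟨rfl, hζ'.le⟩)) (-ζ') (by linarith) ?_
  intro z' hz' hn
  have h2 := snd_close hn
  have hz'2 : z'.2 < 0 := by
    rcases abs_lt.1 h2 with ⟨h3, _⟩; simp at h3 ⊢; linarith
  have hz1 : z'.1 = a := by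
    rcases (mem_gph hab z').1 hz' with ⟨h, _⟩ | ⟨_, h⟩ | ⟨_, h⟩
    · exact h
    · exact absurd h hz'2.ne
    · linarith
  simp [hz1]

/-- L5: at a point (b, ζ') with ζ' > 0, any (ξ,0) is a Fréchet normal. -/
lemma memL5 (hab : a < b) {ζ' : ℝ} (hζ' : 0 < ζ') (ξ : ℝ) :
    ((ξ, 0) : ℝ × ℝ) ∈ frechetNCP (gphNIcc a b) (b, ζ') := by
  refine mem_fre ((mem_gph hab _).2 (Or.inr (Or.inr ⟨rfl, hζ'.le⟩))) ζ' hζ' ?_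
  intro z' hz' hn
  have h2 := snd_close hn
  have hz'2 : 0 < z'.2 := by
    rcases abs_lt.1 h2 with ⟨h3, _⟩; simp at h3 ⊢; linarith
  have hz1 : z'.1 = b := by
    rcases (mem_gph hab z').1 hz' with ⟨_, h⟩ | ⟨_, h⟩ | ⟨h, _⟩
    · linarith
    · exact absurd h hz'2.ne'
    · exact h
  simp [hz1]

/-- L2: at an interior point (y, 0), any (0,η) is a Fréchet normal. -/
lemma memL2 (hab : a < b) {y : ℝ} (hy1 : a < y) (hy2 : y < b) (η : ℝ) :
    ((0, η) : ℝ × ℝ) ∈ frechetNCP (gphNIcc a b) (y, 0) := by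
  refine mem_fre ((mem_gph hab _).2 (Or.inr (Or.inl ⟨⟨hy1.le, hy2.le⟩, rfl⟩)))
    (min (y - a) (b - y)) (lt_min (by linarith) (by linarith)) ?_
  intro z' hz' hn
  have h1 := fst_close hn
  rcases abs_lt.1 h1 with ⟨h3, h4⟩
  simp only at h3 h4
  have hlt1 : a < z'.1 := by
    have := lt_min_iff.1 (lt_of_le_of_lt (le_abs_self _) (fst_close hn)) |>.1
    have := lt_min_iff.1 (lt_of_le_of_lt (neg_le_abs _) (fst_close hn)) |>.1
    linarith
  have hlt2 : z'.1 < b := by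
    have := lt_min_iff.1 (lt_of_le_of_lt (le_abs_self _) (fst_close hn)) |>.2
    linarith
  have hz2 : z'.2 = 0 := by
    rcases (mem_gph hab z').1 hz' with ⟨h, _⟩ | ⟨_, h⟩ | ⟨h, _⟩
    · exact absurd h hlt1.ne'
    · exact h
    · exact absurd h hlt2.ne
  simp [hz2]

/-- L3: at (a, 0), any (ξ,η) with ξ ≤ 0 ≤ η is a Fréchet normal. -/
lemma memL3 (hab : a < b) {ξ η : ℝ} (hξ : ξ ≤ 0) (hη : 0 ≤ η) :
    ((ξ, η) : ℝ × ℝ) ∈ frechetNCP (gphNIcc a b) (a, 0) := by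
  refine mem_fre ((mem_gph hab _).2 (Or.inl ⟨rfl, le_rfl⟩)) (b - a) (by linarith) ?_
  intro z' hz' hn
  have h1 := fst_close hn
  have hne : z'.1 ≠ b := by
    rcases abs_lt.1 h1 with ⟨h3, h4⟩; simp only at h3 h4; intro h; rw [h] at h4; linarith
  rcases (mem_gph hab z').1 hz' with ⟨h, h'⟩ | ⟨h, h'⟩ | ⟨h, _⟩
  · simp only [h]; nlinarith
  · simp only [h']; nlinarith [h.1]
  · exact absurd h hne
/-- L4: at (b, 0), any (ξ,η) with ξ ≥ 0 ≥ η is a Fréchet normal. -/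
lemma memL4 (hab : a < b) {ξ η : ℝ} (hξ : 0 ≤ ξ) (hη : η ≤ 0) :
    ((ξ, η) : ℝ × ℝ) ∈ frechetNCP (gphNIcc a b) (b, 0) := by
  refine mem_fre ((mem_gph hab _).2 (Or.inr (Or.inr ⟨rfl, le_rfl⟩))) (b - a) (by linarith) ?_
  intro z' hz' hn
  have h1 := fst_close hn
  have hne : z'.1 ≠ a := by
    rcases abs_lt.1 h1 with ⟨h3, h4⟩; simp only at h3 h4; intro h; rw [h] at h3; linarith
  rcases (mem_gph hab z').1 hz' with ⟨h, _⟩ | ⟨h, h'⟩ | ⟨h, h'⟩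
  · exact absurd h hne
  · simp only [h']; nlinarith [h.2]
  · simp only [h]; nlinarith

end Suff

section Nec
variable {a b : ℝ}

lemma nec_vert_a (hab : a < b) {z ζ : ℝ × ℝ} (hζ : ζ ∈ frechetNCP (gphNIcc a b) z)
    (hz1 : z.1 = a) (hz2 : z.2 < 0) : ζ.2 = 0 := by
  have hup := test_dir hζ (0, 1) (-z.2) (by linarith)
    (fun t ht ht' => (mem_gph hab _).2 (Or.inl
      ⟨by show z.1 + t * 0 = a; rw [hz1]; ring, by show z.2 + t * 1 ≤ 0; linarith⟩))
  have hdn := test_dir hζ (0, -1) 1 one_pos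
    (fun t ht ht' => (mem_gph hab _).2 (Or.inl
      ⟨by show z.1 + t * 0 = a; rw [hz1]; ring, by show z.2 + t * (-1) ≤ 0; linarith⟩))
  simp only at hup hdn
  nlinarith

lemma nec_vert_b (hab : a < b) {z ζ : ℝ × ℝ} (hζ : ζ ∈ frechetNCP (gphNIcc a b) z)
    (hz1 : z.1 = b) (hz2 : 0 < z.2) : ζ.2 = 0 := by
  have hup := test_dir hζ (0, 1) 1 one_pos
    (fun t ht ht' => (mem_gph hab _).2 (Or.inr (Or.inr
      ⟨by show z.1 + t * 0 = b; rw [hz1]; ring, by show (0:ℝ) ≤ z.2 + t * 1; linarith⟩)))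
  have hdn := test_dir hζ (0, -1) z.2 hz2
    (fun t ht ht' => (mem_gph hab _).2 (Or.inr (Or.inr
      ⟨by show z.1 + t * 0 = b; rw [hz1]; ring, by show (0:ℝ) ≤ z.2 + t * (-1); linarith⟩)))
  simp only at hup hdn
  nlinarith

lemma nec_horiz (hab : a < b) {z ζ : ℝ × ℝ} (hζ : ζ ∈ frechetNCP (gphNIcc a b) z)
    (hz1 : a < z.1) (hz1' : z.1 < b) (hz2 : z.2 = 0) : ζ.1 = 0 := by
  have hr := test_dir hζ (1, 0) (b - z.1) (by linarith)
    (fun t ht ht' => (mem_gph hab _).2 (Or.inr (Or.inl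
      ⟨⟨by show a ≤ z.1 + t * 1; linarith, by show z.1 + t * 1 ≤ b; linarith⟩,
        by show z.2 + t * 0 = 0; rw [hz2]; ring⟩)))
  have hl := test_dir hζ (-1, 0) (z.1 - a) (by linarith)
    (fun t ht ht' => (mem_gph hab _).2 (Or.inr (Or.inl
      ⟨⟨by show a ≤ z.1 + t * (-1); linarith, by show z.1 + t * (-1) ≤ b; linarith⟩,
        by show z.2 + t * 0 = 0; rw [hz2]; ring⟩)))
  simp only at hr hl
  nlinarith

lemma nec_corner_a (hab : a < b) {z ζ : ℝ × ℝ} (hζ : ζ ∈ frechetNCP (gphNIcc a b) z)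
    (hz1 : z.1 = a) (hz2 : z.2 = 0) : ζ.1 ≤ 0 ∧ 0 ≤ ζ.2 := by
  have hr := test_dir hζ (1, 0) (b - a) (by linarith)
    (fun t ht ht' => (mem_gph hab _).2 (Or.inr (Or.inl
      ⟨⟨by show a ≤ z.1 + t * 1; rw [hz1]; linarith, by show z.1 + t * 1 ≤ b; rw [hz1]; linarith⟩,
        by show z.2 + t * 0 = 0; rw [hz2]; ring⟩)))
  have hdn := test_dir hζ (0, -1) 1 one_pos
    (fun t ht ht' => (mem_gph hab _).2 (Or.inl
      ⟨by show z.1 + t * 0 = a; rw [hz1]; ring, by show z.2 + t * (-1) ≤ 0; rw [hz2]; linarith⟩))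
  simp only at hr hdn
  constructor <;> nlinarith

lemma nec_corner_b (hab : a < b) {z ζ : ℝ × ℝ} (hζ : ζ ∈ frechetNCP (gphNIcc a b) z)
    (hz1 : z.1 = b) (hz2 : z.2 = 0) : 0 ≤ ζ.1 ∧ ζ.2 ≤ 0 := by
  have hl := test_dir hζ (-1, 0) (b - a) (by linarith)
    (fun t ht ht' => (mem_gph hab _).2 (Or.inr (Or.inl
      ⟨⟨by show a ≤ z.1 + t * (-1); rw [hz1]; linarith, by show z.1 + t * (-1) ≤ b; rw [hz1]; linarith⟩,
        by show z.2 + t * 0 = 0; rw [hz2]; ring⟩)))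
  have hup := test_dir hζ (0, 1) 1 one_pos
    (fun t ht ht' => (mem_gph hab _).2 (Or.inr (Or.inr
      ⟨by show z.1 + t * 0 = b; rw [hz1]; ring, by show (0:ℝ) ≤ z.2 + t * 1; rw [hz2]; linarith⟩)))
  simp only at hl hup
  constructor <;> nlinarith

end Nec

section Cases
variable {a b : ℝ}

lemma caseA (hab : a < b) {ζbar : ℝ} (hζbar : ζbar < 0) :
    limNCP (gphNIcc a b) (a, ζbar) = (univ : Set ℝ) ×ˢ {(0 : ℝ)} := by
  ext p
  constructor
  · rintro ⟨zs, ζs, hzs, hζs, hmem⟩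
    refine ⟨trivial, ?_⟩
    have hev : ∀ᶠ k in atTop, zs k ∈ Metric.ball ((a, ζbar) : ℝ × ℝ) (-ζbar) :=
      hzs (Metric.ball_mem_nhds _ (by linarith))
    have hev2 : ∀ᶠ k in atTop, (ζs k).2 ∈ ({0} : Set ℝ) := by
      filter_upwards [hev] with k hk
      rw [Metric.mem_ball, dist_eq_norm] at hk
      have h2 := snd_close hk
      have hz2 : (zs k).2 < 0 := by
        rcases abs_lt.1 h2 with ⟨h3, _⟩; simp only at h3; linarith
      have hz1 : (zs k).1 = a := by
        rcases (mem_gph hab _).1 (hmem k).1 with ⟨h, _⟩ | ⟨_, h⟩ | ⟨_, h⟩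
        · exact h
        · exact absurd h hz2.ne
        · linarith
      exact nec_vert_a hab (hmem k) hz1 hz2
    exact isClosed_singleton.mem_of_tendsto ((continuous_snd.tendsto p).comp hζs) hev2
  · rintro ⟨-, hp2⟩
    simp only [mem_singleton_iff] at hp2
    refine ⟨fun _ => (a, ζbar), fun _ => p, tendsto_const_nhds, tendsto_const_nhds, fun k => ?_⟩
    have : p = (p.1, (0:ℝ)) := by rw [← hp2]
    rw [this]
    exact memL1 hab hζbar p.1

lemma caseE (hab : a < b) {ζbar : ℝ} (hζbar : 0 < ζbar) :
    limNCP (gphNIcc a b) (b, ζbar) = (univ : Set ℝ) ×ˢ {(0 : ℝ)} := by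
  ext p
  constructor
  · rintro ⟨zs, ζs, hzs, hζs, hmem⟩
    refine ⟨trivial, ?_⟩
    have hev : ∀ᶠ k in atTop, zs k ∈ Metric.ball ((b, ζbar) : ℝ × ℝ) ζbar :=
      hzs (Metric.ball_mem_nhds _ hζbar)
    have hev2 : ∀ᶠ k in atTop, (ζs k).2 ∈ ({0} : Set ℝ) := by
      filter_upwards [hev] with k hk
      rw [Metric.mem_ball, dist_eq_norm] at hk
      have h2 := snd_close hk
      have hz2 : 0 < (zs k).2 := by
        rcases abs_lt.1 h2 with ⟨h3, _⟩; simp only at h3; linarith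
      have hz1 : (zs k).1 = b := by
        rcases (mem_gph hab _).1 (hmem k).1 with ⟨_, h⟩ | ⟨_, h⟩ | ⟨h, _⟩
        · linarith
        · exact absurd h hz2.ne'
        · exact h
      exact nec_vert_b hab (hmem k) hz1 hz2
    exact isClosed_singleton.mem_of_tendsto ((continuous_snd.tendsto p).comp hζs) hev2
  · rintro ⟨-, hp2⟩
    simp only [mem_singleton_iff] at hp2
    refine ⟨fun _ => (b, ζbar), fun _ => p, tendsto_const_nhds, tendsto_const_nhds, fun k => ?_⟩
    have : p = (p.1, (0:ℝ)) := by rw [← hp2]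
    rw [this]
    exact memL5 hab hζbar p.1

lemma caseC (hab : a < b) {ybar : ℝ} (hy1 : a < ybar) (hy2 : ybar < b) :
    limNCP (gphNIcc a b) (ybar, 0) = {(0 : ℝ)} ×ˢ (univ : Set ℝ) := by
  ext p
  constructor
  · rintro ⟨zs, ζs, hzs, hζs, hmem⟩
    refine ⟨?_, trivial⟩
    have hev : ∀ᶠ k in atTop, zs k ∈ Metric.ball ((ybar, 0) : ℝ × ℝ) (min (ybar - a) (b - ybar)) :=
      hzs (Metric.ball_mem_nhds _ (lt_min (by linarith) (by linarith)))
    have hev2 : ∀ᶠ k in atTop, (ζs k).1 ∈ ({0} : Set ℝ) := by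
      filter_upwards [hev] with k hk
      rw [Metric.mem_ball, dist_eq_norm] at hk
      have h1 := fst_close hk
      rcases abs_lt.1 h1 with ⟨h3, h4⟩
      simp only at h3 h4
      have hm1 := lt_min_iff.1 h4
      have hm2 := lt_min_iff.1 (neg_lt.1 (lt_of_lt_of_le (neg_lt_of_neg_lt (neg_lt.2 h3)) le_rfl))
      have hlt1 : a < (zs k).1 := by
        have := h3
        have h5 : -(min (ybar - a) (b - ybar)) < (zs k).1 - ybar := h3
        have := min_le_left (ybar - a) (b - ybar)
        linarith
      have hlt2 : (zs k).1 < b := by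
        have := min_le_right (ybar - a) (b - ybar)
        linarith [hm1.2]
      have hz2 : (zs k).2 = 0 := by
        rcases (mem_gph hab _).1 (hmem k).1 with ⟨h, _⟩ | ⟨_, h⟩ | ⟨h, _⟩
        · exact absurd h hlt1.ne'
        · exact h
        · exact absurd h hlt2.ne
      exact nec_horiz hab (hmem k) hlt1 hlt2 hz2
    exact isClosed_singleton.mem_of_tendsto ((continuous_fst.tendsto p).comp hζs) hev2
  · rintro ⟨hp1, -⟩
    simp only [mem_singleton_iff] at hp1
    refine ⟨fun _ => (ybar, 0), fun _ => p, tendsto_const_nhds, tendsto_const_nhds, fun k => ?_⟩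
    have : p = ((0:ℝ), p.2) := by rw [← hp1]
    rw [this]
    exact memL2 hab hy1 hy2 p.2

end Cases

section Corner
variable {a b : ℝ}

lemma seq_pos (k : ℕ) : (0:ℝ) < 1 / ((k:ℝ) + 1) := by positivity

lemma seq_le_one (k : ℕ) : 1 / ((k:ℝ) + 1) ≤ 1 := by
  rw [div_le_one (by positivity)]
  have : (0:ℝ) ≤ (k:ℝ) := Nat.cast_nonneg k
  linarith

lemma caseB (hab : a < b) :
    limNCP (gphNIcc a b) (a, 0) =
      (Iic (0 : ℝ) ×ˢ Ici (0 : ℝ)) ∪ ((univ : Set ℝ) ×ˢ {(0 : ℝ)}) ∪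
        ({(0 : ℝ)} ×ˢ (univ : Set ℝ)) := by
  ext p
  constructor
  · rintro ⟨zs, ζs, hzs, hζs, hmem⟩
    have hS : IsClosed ((Iic (0 : ℝ) ×ˢ Ici (0 : ℝ)) ∪ ((univ : Set ℝ) ×ˢ {(0 : ℝ)}) ∪
        ({(0 : ℝ)} ×ˢ (univ : Set ℝ))) :=
      ((isClosed_Iic.prod isClosed_Ici).union (isClosed_univ.prod isClosed_singleton)).union
        (isClosed_singleton.prod isClosed_univ)
    have hev : ∀ᶠ k in atTop, zs k ∈ Metric.ball ((a, 0) : ℝ × ℝ) (b - a) :=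
      hzs (Metric.ball_mem_nhds _ (by linarith))
    have hev2 : ∀ᶠ k in atTop, ζs k ∈ (Iic (0 : ℝ) ×ˢ Ici (0 : ℝ)) ∪
        ((univ : Set ℝ) ×ˢ {(0 : ℝ)}) ∪ ({(0 : ℝ)} ×ˢ (univ : Set ℝ)) := by
      filter_upwards [hev] with k hk
      rw [Metric.mem_ball, dist_eq_norm] at hk
      have h1 := fst_close hk
      have hltb : (zs k).1 < b := by
        rcases abs_lt.1 h1 with ⟨_, h4⟩; simp only at h4; linarith
      rcases (mem_gph hab _).1 (hmem k).1 with ⟨h, h'⟩ | ⟨h, h'⟩ | ⟨h, _⟩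
      · rcases lt_or_eq_of_le h' with h2 | h2
        · exact Or.inl (Or.inr ⟨trivial, nec_vert_a hab (hmem k) h h2⟩)
        · exact Or.inl (Or.inl ⟨(nec_corner_a hab (hmem k) h h2).1,
            (nec_corner_a hab (hmem k) h h2).2⟩)
      · rcases lt_or_eq_of_le h.1 with h2 | h2
        · exact Or.inr ⟨nec_horiz hab (hmem k) h2 hltb h', trivial⟩
        · exact Or.inl (Or.inl ⟨(nec_corner_a hab (hmem k) h2.symm h').1,
            (nec_corner_a hab (hmem k) h2.symm h').2⟩)
      · exact absurd h hltb.ne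
    exact hS.mem_of_tendsto hζs hev2
  · rintro ((⟨hp1, hp2⟩ | ⟨-, hp2⟩) | ⟨hp1, -⟩)
    · refine ⟨fun _ => (a, 0), fun _ => p, tendsto_const_nhds, tendsto_const_nhds, fun k => ?_⟩
      have : p = (p.1, p.2) := rfl
      rw [this]
      exact memL3 hab hp1 hp2
    · -- p.2 = 0 : approach along the vertical part
      simp only [mem_singleton_iff] at hp2
      refine ⟨fun k => (a, -(1 / ((k:ℝ) + 1))), fun _ => p, ?_, tendsto_const_nhds, fun k => ?_⟩
      · have h0 : Tendsto (fun k : ℕ => -(1 / ((k:ℝ) + 1))) atTop (𝓝 0) := by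
          simpa using (tendsto_one_div_add_atTop_nhds_zero_nat (𝕜 := ℝ)).neg
        exact tendsto_const_nhds.prodMk_nhds h0
      · have : p = (p.1, (0:ℝ)) := by rw [← hp2]
        rw [this]
        exact memL1 hab (by simpa using (seq_pos k)) p.1
    · -- p.1 = 0 : approach along the horizontal part
      simp only [mem_singleton_iff] at hp1
      refine ⟨fun k => (a + (b - a) / 2 * (1 / ((k:ℝ) + 1)), 0), fun _ => p, ?_,
        tendsto_const_nhds, fun k => ?_⟩
      · have h0 : Tendsto (fun k : ℕ => a + (b - a) / 2 * (1 / ((k:ℝ) + 1))) atTop (𝓝 a) := by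
          have := (tendsto_one_div_add_atTop_nhds_zero_nat).const_mul ((b - a) / 2)
          simpa using tendsto_const_nhds.add this
        exact h0.prodMk_nhds tendsto_const_nhds
      · have hlt1 : a < a + (b - a) / 2 * (1 / ((k:ℝ) + 1)) := by
          nlinarith [seq_pos k]
        have hlt2 : a + (b - a) / 2 * (1 / ((k:ℝ) + 1)) < b := by
          nlinarith [seq_pos k, seq_le_one k]
        have : p = ((0:ℝ), p.2) := by rw [← hp1]
        rw [this]
        exact memL2 hab hlt1 hlt2 p.2

lemma caseD (hab : a < b) :
    limNCP (gphNIcc a b) (b, 0) =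
      (Ici (0 : ℝ) ×ˢ Iic (0 : ℝ)) ∪ ((univ : Set ℝ) ×ˢ {(0 : ℝ)}) ∪
        ({(0 : ℝ)} ×ˢ (univ : Set ℝ)) := by
  ext p
  constructor
  · rintro ⟨zs, ζs, hzs, hζs, hmem⟩
    have hS : IsClosed ((Ici (0 : ℝ) ×ˢ Iic (0 : ℝ)) ∪ ((univ : Set ℝ) ×ˢ {(0 : ℝ)}) ∪
        ({(0 : ℝ)} ×ˢ (univ : Set ℝ))) :=
      ((isClosed_Ici.prod isClosed_Iic).union (isClosed_univ.prod isClosed_singleton)).union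
        (isClosed_singleton.prod isClosed_univ)
    have hev : ∀ᶠ k in atTop, zs k ∈ Metric.ball ((b, 0) : ℝ × ℝ) (b - a) :=
      hzs (Metric.ball_mem_nhds _ (by linarith))
    have hev2 : ∀ᶠ k in atTop, ζs k ∈ (Ici (0 : ℝ) ×ˢ Iic (0 : ℝ)) ∪
        ((univ : Set ℝ) ×ˢ {(0 : ℝ)}) ∪ ({(0 : ℝ)} ×ˢ (univ : Set ℝ)) := by
      filter_upwards [hev] with k hk
      rw [Metric.mem_ball, dist_eq_norm] at hk
      have h1 := fst_close hk
      have hgta : a < (zs k).1 := by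
        rcases abs_lt.1 h1 with ⟨h3, _⟩; simp only at h3; linarith
      rcases (mem_gph hab _).1 (hmem k).1 with ⟨h, _⟩ | ⟨h, h'⟩ | ⟨h, h'⟩
      · exact absurd h hgta.ne'
      · rcases lt_or_eq_of_le h.2 with h2 | h2
        · exact Or.inr ⟨nec_horiz hab (hmem k) hgta h2 h', trivial⟩
        · exact Or.inl (Or.inl ⟨(nec_corner_b hab (hmem k) h2 h').1,
            (nec_corner_b hab (hmem k) h2 h').2⟩)
      · rcases lt_or_eq_of_le h' with h2 | h2
        · exact Or.inl (Or.inr ⟨trivial, nec_vert_b hab (hmem k) h h2⟩)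
        · exact Or.inl (Or.inl ⟨(nec_corner_b hab (hmem k) h h2.symm).1,
            (nec_corner_b hab (hmem k) h h2.symm).2⟩)
    exact hS.mem_of_tendsto hζs hev2
  · rintro ((⟨hp1, hp2⟩ | ⟨-, hp2⟩) | ⟨hp1, -⟩)
    · refine ⟨fun _ => (b, 0), fun _ => p, tendsto_const_nhds, tendsto_const_nhds, fun k => ?_⟩
      have : p = (p.1, p.2) := rfl
      rw [this]
      exact memL4 hab hp1 hp2
    · simp only [mem_singleton_iff] at hp2
      refine ⟨fun k => (b, 1 / ((k:ℝ) + 1)), fun _ => p, ?_, tendsto_const_nhds, fun k => ?_⟩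
      · exact tendsto_const_nhds.prodMk_nhds tendsto_one_div_add_atTop_nhds_zero_nat
      · have : p = (p.1, (0:ℝ)) := by rw [← hp2]
        rw [this]
        exact memL5 hab (seq_pos k) p.1
    · simp only [mem_singleton_iff] at hp1
      refine ⟨fun k => (b - (b - a) / 2 * (1 / ((k:ℝ) + 1)), 0), fun _ => p, ?_,
        tendsto_const_nhds, fun k => ?_⟩
      · have h0 : Tendsto (fun k : ℕ => b - (b - a) / 2 * (1 / ((k:ℝ) + 1))) atTop (𝓝 b) := by
          have := (tendsto_one_div_add_atTop_nhds_zero_nat).const_mul ((b - a) / 2)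
          simpa using tendsto_const_nhds.sub this
        exact h0.prodMk_nhds tendsto_const_nhds
      · have hlt1 : a < b - (b - a) / 2 * (1 / ((k:ℝ) + 1)) := by
          nlinarith [seq_pos k, seq_le_one k]
        have hlt2 : b - (b - a) / 2 * (1 / ((k:ℝ) + 1)) < b := by
          nlinarith [seq_pos k]
        have : p = ((0:ℝ), p.2) := by rw [← hp1]
        rw [this]
        exact memL2 hab hlt1 hlt2 p.2

end Corner

/-- explicit description of the graph of the normal cone map of an
interval `[a,b]` and of its limiting normal cones. -/
theorem stmt17 (a b : ℝ) (hab : a < b) :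
    gphNIcc a b = ({a} ×ˢ Iic (0 : ℝ)) ∪ (Icc a b ×ˢ {(0 : ℝ)}) ∪
      ({b} ×ˢ Ici (0 : ℝ)) ∧
    ∀ ybar ζbar : ℝ, (ybar, ζbar) ∈ gphNIcc a b →
      ((ybar = a ∧ ζbar < 0 →
        limNCP (gphNIcc a b) (ybar, ζbar) = (univ : Set ℝ) ×ˢ {(0 : ℝ)}) ∧
      (ybar = a ∧ ζbar = 0 →
        limNCP (gphNIcc a b) (ybar, ζbar) =
          (Iic (0 : ℝ) ×ˢ Ici (0 : ℝ)) ∪ ((univ : Set ℝ) ×ˢ {(0 : ℝ)}) ∪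
            ({(0 : ℝ)} ×ˢ (univ : Set ℝ))) ∧
      (a < ybar ∧ ybar < b ∧ ζbar = 0 →
        limNCP (gphNIcc a b) (ybar, ζbar) = {(0 : ℝ)} ×ˢ (univ : Set ℝ)) ∧
      (ybar = b ∧ ζbar = 0 →
        limNCP (gphNIcc a b) (ybar, ζbar) =
          (Ici (0 : ℝ) ×ˢ Iic (0 : ℝ)) ∪ ((univ : Set ℝ) ×ˢ {(0 : ℝ)}) ∪
            ({(0 : ℝ)} ×ˢ (univ : Set ℝ))) ∧
      (ybar = b ∧ 0 < ζbar →
        limNCP (gphNIcc a b) (ybar, ζbar) = (univ : Set ℝ) ×ˢ {(0 : ℝ)})) := by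
  constructor
  · ext p
    rw [mem_gph hab]
    simp only [mem_union, mem_prod, mem_singleton_iff, mem_Iic, mem_Ici]
    tauto
  · intro ybar ζbar _
    refine ⟨?_, ?_, ?_, ?_, ?_⟩
    · rintro ⟨rfl, h2⟩; exact caseA hab h2
    · rintro ⟨rfl, rfl⟩; exact caseB hab
    · rintro ⟨h1, h2, rfl⟩; exact caseC hab h1 h2
    · rintro ⟨rfl, rfl⟩; exact caseD hab
    · rintro ⟨rfl, h2⟩; exact caseE hab h2
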